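/- Let U and V be finite sets and let P_{UV} and Q_{UV} be probability mass functions on U × V such that P_{UV}(u,v) = 0 whenever Q_{UV}(u,v) = 0; denote by P_U, P_V, Q_V the corresponding marginals and Q_{U|V}(u|v) = Q_{UV}(u,v)/Q_V(v) for Q_V(v) > 0. Define T_U(u) := Σ_v P_V(v) Q_{U|V}(u|v). If T_U ≠ P_U, then every probability mass function π_{UV} on U × V with U-marginal equal to P_U and V-marginal equal to P_V satisfies D(π_{UV} ‖ Q_{UV}) > D(P_V ‖ Q_V). -/

import Mathlib

/-!
STATEMENT 7: For pmfs `P_{UV}, Q_{UV}` on `U × V` with `P_{UV} ≪ Q_{UV}`, define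
`T_U(u) := Σ_v P_V(v) Q_{U|V}(u|v)`. If `T_U ≠ P_U`, then every pmf `π_{UV}` on `U × V` with
`U`-marginal `P_U` and `V`-marginal `P_V` satisfies `D(π_{UV} ‖ Q_{UV}) > D(P_V ‖ Q_V)`,
the KL divergences taking values in the extended reals (`= +∞` without absolute continuity).
-/

open scoped BigOperators

/-- `P` is a probability mass function on the finite set `Z`. -/
def IsPmf {Z : Type*} [Fintype Z] (P : Z → ℝ) : Prop :=
  (∀ z, 0 ≤ P z) ∧ ∑ z, P z = 1

/-- Kullback–Leibler divergence (natural log, terms with `P z = 0` contribute `0`);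
only meaningful when `P` is absolutely continuous w.r.t. `Q`. -/
noncomputable def klDiv {Z : Type*} [Fintype Z] (P Q : Z → ℝ) : ℝ :=
  ∑ z, if 0 < P z then P z * Real.log (P z / Q z) else 0

/-- Extended-real Kullback–Leibler divergence: equals `+∞` if `P` is not absolutely
continuous with respect to `Q`. -/
noncomputable def klDivE {Z : Type*} [Fintype Z] (P Q : Z → ℝ) : EReal :=
  if ∀ z, Q z = 0 → P z = 0 then ((klDiv P Q : ℝ) : EReal) else ⊤

lemma gibbs_pos {Z : Type*} [Fintype Z] (a b : Z → ℝ) (ha : IsPmf a) (hb : IsPmf b)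
    (habs : ∀ z, b z = 0 → a z = 0) (hne : a ≠ b) : 0 < klDiv a b := by
  obtain ⟨z0, hz0⟩ := Function.ne_iff.mp hne
  have hbpos : ∀ z, 0 < a z → 0 < b z := by
    intro z hz
    rcases (hb.1 z).lt_or_eq with h | h
    · exact h
    · rw [habs z h.symm] at hz; exact absurd hz (lt_irrefl 0)
  have hpt : ∀ z, (if 0 < a z then a z - b z else 0) ≤
      (if 0 < a z then a z * Real.log (a z / b z) else 0) := by
    intro z
    by_cases h : 0 < a z
    · simp only [if_pos h]
      have hb' := hbpos z h
      have hL : Real.log (b z / a z) ≤ b z / a z - 1 :=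
        Real.log_le_sub_one_of_pos (div_pos hb' h)
      have hinv : Real.log (a z / b z) = - Real.log (b z / a z) := by
        rw [← Real.log_inv, inv_div]
      have hc : a z * (b z / a z) = b z := by field_simp
      nlinarith [mul_le_mul_of_nonneg_left hL h.le]
    · simp [h]
  have hlow : (∑ z, (if 0 < a z then a z - b z else 0)) =
      1 - ∑ z, (if 0 < a z then b z else 0) := by
    have : ∀ z, (if 0 < a z then a z - b z else 0) =
        a z - (if 0 < a z then b z else 0) := by
      intro z
      by_cases h : 0 < a z
      · simp [h]
      · have : a z = 0 := le_antisymm (not_lt.mp h) (ha.1 z)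
        simp [h, this]
    rw [Finset.sum_congr rfl fun z _ => this z, Finset.sum_sub_distrib, ha.2]
  have hble : (∑ z, (if 0 < a z then b z else 0)) ≤ ∑ z, b z := by
    apply Finset.sum_le_sum
    intro z _
    by_cases h : 0 < a z <;> simp [h, hb.1 z]
  rcases (ha.1 z0).lt_or_eq with h0 | h0
  · -- a z0 > 0, strict term
    have hstrict : (if 0 < a z0 then a z0 - b z0 else 0) <
        (if 0 < a z0 then a z0 * Real.log (a z0 / b z0) else 0) := by
      simp only [if_pos h0]
      have hb' := hbpos z0 h0
      have hne1 : b z0 / a z0 ≠ 1 := by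
        intro h
        apply hz0
        field_simp at h
        linarith
      have hL : Real.log (b z0 / a z0) < b z0 / a z0 - 1 :=
        Real.log_lt_sub_one_of_pos (div_pos hb' h0) hne1
      have hinv : Real.log (a z0 / b z0) = - Real.log (b z0 / a z0) := by
        rw [← Real.log_inv, inv_div]
      have hc : a z0 * (b z0 / a z0) = b z0 := by field_simp
      nlinarith [mul_lt_mul_of_pos_left hL h0]
    have hsum : (∑ z, (if 0 < a z then a z - b z else 0)) < klDiv a b := by
      apply Finset.sum_lt_sum (fun z _ => hpt z) ⟨z0, Finset.mem_univ z0, hstrict⟩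
    have : (0:ℝ) ≤ ∑ z, (if 0 < a z then a z - b z else 0) := by
      rw [hlow]; linarith [hble, hb.2.le, hb.2]
    linarith [hsum, this, hb.2]
  · -- a z0 = 0, b z0 > 0
    have hbz0 : 0 < b z0 := (hb.1 z0).lt_of_ne (fun h => hz0 (by rw [← h0, ← h]))
    have hblt : (∑ z, (if 0 < a z then b z else 0)) < ∑ z, b z := by
      apply Finset.sum_lt_sum
      · intro z _; by_cases h : 0 < a z <;> simp [h, hb.1 z]
      · refine ⟨z0, Finset.mem_univ z0, ?_⟩
        rw [if_neg (by rw [← h0]; exact lt_irrefl 0)]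
        exact hbz0
    have h1 : (0:ℝ) < ∑ z, (if 0 < a z then a z - b z else 0) := by
      rw [hlow]; rw [hb.2] at hblt; linarith
    have hsum : (∑ z, (if 0 < a z then a z - b z else 0)) ≤ klDiv a b :=
      Finset.sum_le_sum (fun z _ => hpt z)
    linarith

theorem klDiv_gt_of_TU_ne_PU {U V : Type*} [Fintype U] [Fintype V]
    (P Q : U × V → ℝ) (hP : IsPmf P) (hQ : IsPmf Q)
    (habs : ∀ p, Q p = 0 → P p = 0)
    (hTU : (fun u => ∑ v, (∑ u', P (u', v)) * (Q (u, v) / ∑ u', Q (u', v))) ≠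
           (fun u => ∑ v, P (u, v))) :
    ∀ π : U × V → ℝ, IsPmf π →
      (∀ u, ∑ v, π (u, v) = ∑ v, P (u, v)) →
      (∀ v, ∑ u, π (u, v) = ∑ u, P (u, v)) →
      klDivE (fun v => ∑ u, P (u, v)) (fun v => ∑ u, Q (u, v)) < klDivE π Q := by
  intro π hπ hU hV
  set PV : V → ℝ := fun v => ∑ u, P (u, v) with hPVdef
  set QV : V → ℝ := fun v => ∑ u, Q (u, v) with hQVdef
  have hQ0 : ∀ p : U × V, QV p.2 = 0 → Q p = 0 := by
    intro p h
    exact (Finset.sum_eq_zero_iff_of_nonneg (fun u _ => hQ.1 (u, p.2))).mp h p.1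
      (Finset.mem_univ _)
  have hPV0 : ∀ v, QV v = 0 → PV v = 0 := by
    intro v h
    exact Finset.sum_eq_zero fun u _ => habs (u, v) (hQ0 (u, v) h)
  have hPVnn : ∀ v, 0 ≤ PV v := fun v => Finset.sum_nonneg fun u _ => hP.1 (u, v)
  have hQVnn : ∀ v, 0 ≤ QV v := fun v => Finset.sum_nonneg fun u _ => hQ.1 (u, v)
  have hπPV : ∀ v, (∑ u, π (u, v)) = PV v := hV
  have hπ0 : ∀ u v, PV v = 0 → π (u, v) = 0 := by
    intro u v h
    have h' : (∑ u, π (u, v)) = 0 := by rw [hπPV v, h]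
    exact (Finset.sum_eq_zero_iff_of_nonneg (fun u _ => hπ.1 (u, v))).mp h' u
      (Finset.mem_univ _)
  have hLHS : klDivE PV QV = ((klDiv PV QV : ℝ) : EReal) := if_pos hPV0
  by_cases habsπ : ∀ p : U × V, Q p = 0 → π p = 0
  · -- finite case
    have hRHS : klDivE π Q = ((klDiv π Q : ℝ) : EReal) := if_pos habsπ
    set R : U × V → ℝ := fun p => PV p.2 * (Q p / QV p.2) with hRdef
    have hRnn : ∀ p, 0 ≤ R p := fun p =>
      mul_nonneg (hPVnn p.2) (div_nonneg (hQ.1 p) (hQVnn p.2))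
    have hPVsum : ∑ v, PV v = 1 := by
      rw [hPVdef, ← Fintype.sum_prod_type_right, hP.2]
    have hRpmf : IsPmf R := by
      refine ⟨hRnn, ?_⟩
      rw [Fintype.sum_prod_type_right]
      have key : ∀ v, (∑ u, R (u, v)) = PV v := by
        intro v
        by_cases h : QV v = 0
        · rw [hPV0 v h]
          exact Finset.sum_eq_zero fun u _ => by simp [hRdef, hPV0 v h]
        · have : (∑ u, R (u, v)) = PV v * (QV v / QV v) := by
            simp only [hRdef]
            rw [← Finset.mul_sum, ← Finset.sum_div]
          rw [this, div_self h, mul_one]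
      rw [Finset.sum_congr rfl fun v _ => key v, hPVsum]
    have habsR : ∀ p, R p = 0 → π p = 0 := by
      intro p h
      rcases mul_eq_zero.mp h with h1 | h2
      · exact hπ0 p.1 p.2 h1
      · rcases div_eq_zero_iff.mp h2 with h3 | h3
        · exact habsπ p h3
        · exact habsπ p (hQ0 p h3)
    have hπne : π ≠ R := by
      intro h
      apply hTU
      funext u
      calc (∑ v, PV v * (Q (u, v) / QV v)) = ∑ v, R (u, v) := rfl
        _ = ∑ v, π (u, v) := by rw [h]
        _ = ∑ v, P (u, v) := hU u
    have hgibbs : 0 < klDiv π R := gibbs_pos π R hπ hRpmf habsR hπne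
    -- chain-rule identity
    have hsplit : klDiv π Q = klDiv π R +
        ∑ p : U × V, (if 0 < π p then π p * Real.log (PV p.2 / QV p.2) else 0) := by
      unfold klDiv
      rw [← Finset.sum_add_distrib]
      apply Finset.sum_congr rfl
      intro p _
      by_cases h : 0 < π p
      · simp only [if_pos h]
        have hQp : 0 < Q p := by
          rcases (hQ.1 p).lt_or_eq with h' | h'
          · exact h'
          · rw [habsπ p h'.symm] at h; exact absurd h (lt_irrefl 0)
        have hQVp : 0 < QV p.2 := by
          rcases (hQVnn p.2).lt_or_eq with h' | h'
          · exact h'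
          · rw [habsπ p (hQ0 p h'.symm)] at h; exact absurd h (lt_irrefl 0)
        have hPVp : 0 < PV p.2 := by
          rcases (hPVnn p.2).lt_or_eq with h' | h'
          · exact h'
          · rw [hπ0 p.1 p.2 h'.symm] at h; exact absurd h (lt_irrefl 0)
        have hRp : 0 < R p := mul_pos hPVp (div_pos hQp hQVp)
        have key : π p / Q p = (π p / R p) * (PV p.2 / QV p.2) := by
          simp only [hRdef]
          field_simp
        rw [key, Real.log_mul (ne_of_gt (div_pos h hRp)) (ne_of_gt (div_pos hPVp hQVp)),
          mul_add]
      · simp [h]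
    have hmarg : (∑ p : U × V, (if 0 < π p then π p * Real.log (PV p.2 / QV p.2) else 0))
        = klDiv PV QV := by
      unfold klDiv
      rw [Fintype.sum_prod_type_right]
      apply Finset.sum_congr rfl
      intro v _
      by_cases h : 0 < PV v
      · rw [if_pos h]
        have : ∀ u, (if 0 < π (u, v) then π (u, v) * Real.log (PV v / QV v) else 0)
            = π (u, v) * Real.log (PV v / QV v) := by
          intro u
          by_cases h' : 0 < π (u, v)
          · rw [if_pos h']
          · rw [if_neg h', le_antisymm (not_lt.mp h') (hπ.1 (u, v)), zero_mul]
        rw [Finset.sum_congr rfl fun u _ => this u, ← Finset.sum_mul, hπPV v]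
      · rw [if_neg h]
        have hPVv : PV v = 0 := le_antisymm (not_lt.mp h) (hPVnn v)
        exact Finset.sum_eq_zero fun u _ => by
          rw [if_neg (by rw [hπ0 u v hPVv]; exact lt_irrefl 0)]
    have : klDiv PV QV < klDiv π Q := by rw [hsplit, hmarg]; linarith
    rw [hLHS, hRHS]
    exact_mod_cast this
  · have hRHS' : klDivE π Q = ⊤ := if_neg habsπ
    rw [hLHS, hRHS']
    exact EReal.coe_lt_top _
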